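/- For a field F of characteristic 0 or greater than d and n ≥ d, the multiplication map φ: S_F^-(n,d) ⊗_{S_F(n,d)} S_F^-(n,d) → S_F(n,d) is an isomorphism of (S_F(n,d), S_F(n,d))-bimodules; consequently the Koszul duality functor D(M) = S_F^-(n,d) ⊗_{S_F(n,d)} M is an equivalence of the category of S_F(n,d)-modules with itself. -/

import Mathlib

/-- A `ℤ/2ℤ`-grading of a ring `AS`: a subring `S` (the even part) and an additive subgroup
`Sm` (the odd part) with `S·Sm ⊆ Sm`, `Sm·S ⊆ Sm` and `Sm·Sm ⊆ S`. -/
structure GradedPair (AS : Type*) [Ring AS] where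
  S : Subring AS
  Sm : AddSubgroup AS
  smul_mem : ∀ s ∈ S, ∀ x ∈ Sm, s * x ∈ Sm
  mul_smem : ∀ x ∈ Sm, ∀ s ∈ S, x * s ∈ Sm
  mm_mem : ∀ x ∈ Sm, ∀ y ∈ Sm, x * y ∈ S

namespace GradedPair

variable {AS : Type*} [Ring AS] (g : GradedPair AS)

/-- The odd part `S⁻` is a left module over the even part `S`, by multiplication. -/
instance : SMul g.S g.Sm :=
  ⟨fun s x => ⟨(s : AS) * (x : AS), g.smul_mem _ s.2 _ x.2⟩⟩

@[simp] lemma coe_smul (s : g.S) (x : g.Sm) : ((s • x : g.Sm) : AS) = (s : AS) * x := rfl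

instance : MulAction g.S g.Sm where
  one_smul x := Subtype.ext (one_mul _)
  mul_smul s t x := Subtype.ext (mul_assoc _ _ _)

instance : DistribMulAction g.S g.Sm where
  smul_zero s := Subtype.ext (mul_zero _)
  smul_add s x y := Subtype.ext (mul_add _ _ _)

instance : Module g.S g.Sm where
  add_smul s t x := Subtype.ext (add_mul _ _ _)
  zero_smul x := Subtype.ext (zero_mul _)

/-- The element `x · s` of `S⁻`, for `x ∈ S⁻` and `s ∈ S` (the right action). -/
def rmul (x : g.Sm) (s : g.S) : g.Sm :=
  ⟨(x : AS) * (s : AS), g.mul_smem _ x.2 _ s.2⟩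

/-- The element `x · y` of `S`, for `x, y ∈ S⁻`. -/
def mm (x y : g.Sm) : g.S := ⟨(x : AS) * (y : AS), g.mm_mem _ x.2 _ y.2⟩

variable (N : Type*) [AddCommGroup N] [Module g.S N]

/-- The defining relations of the tensor product `S⁻ ⊗_S N`, inside the free `S`-module
on `S⁻ × N`: biadditivity, `S`-balancedness, and left `S`-linearity in the first factor. -/
noncomputable def TRel : Submodule g.S ((g.Sm × N) →₀ g.S) :=
  Submodule.span g.S
    ({z | ∃ (x x' : g.Sm) (n : N), z = Finsupp.single (x + x', n) 1 -
        Finsupp.single (x, n) 1 - Finsupp.single (x', n) 1} ∪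
     {z | ∃ (x : g.Sm) (n n' : N), z = Finsupp.single (x, n + n') 1 -
        Finsupp.single (x, n) 1 - Finsupp.single (x, n') 1} ∪
     {z | ∃ (x : g.Sm) (s : g.S) (n : N), z = Finsupp.single (g.rmul x s, n) 1 -
        Finsupp.single (x, s • n) 1} ∪
     {z | ∃ (s : g.S) (x : g.Sm) (n : N), z = Finsupp.single (s • x, n) 1 -
        s • Finsupp.single (x, n) 1})

/-- The tensor product `S⁻ ⊗_S N`, as a left `S`-module (the Koszul dual `D(N)`). -/
abbrev T := ((g.Sm × N) →₀ g.S) ⧸ g.TRel N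

variable {N}

/-- The canonical map `S⁻ × N → S⁻ ⊗_S N`, `(x, n) ↦ x ⊗ n`. -/
noncomputable def tmk (x : g.Sm) (n : N) : g.T N :=
  Submodule.Quotient.mk (Finsupp.single (x, n) 1)

end GradedPair

/-! ### Auxiliary lemmas -/

namespace GradedPair

variable {AS : Type*} [Ring AS] (g : GradedPair AS)
variable {N : Type*} [AddCommGroup N] [Module g.S N]

lemma tmk_add_left (x x' : g.Sm) (n : N) :
    g.tmk (x + x') n = g.tmk x n + g.tmk x' n := by
  show Submodule.Quotient.mk _ = Submodule.Quotient.mk _ + Submodule.Quotient.mk _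
  rw [← Submodule.Quotient.mk_add, Submodule.Quotient.eq]
  refine Submodule.subset_span ?_
  refine Or.inl (Or.inl (Or.inl ⟨x, x', n, ?_⟩))
  abel

lemma tmk_add_right (x : g.Sm) (n n' : N) :
    g.tmk x (n + n') = g.tmk x n + g.tmk x n' := by
  show Submodule.Quotient.mk _ = Submodule.Quotient.mk _ + Submodule.Quotient.mk _
  rw [← Submodule.Quotient.mk_add, Submodule.Quotient.eq]
  refine Submodule.subset_span ?_
  refine Or.inl (Or.inl (Or.inr ⟨x, n, n', ?_⟩))
  abel

lemma tmk_rmul (x : g.Sm) (s : g.S) (n : N) :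
    g.tmk (g.rmul x s) n = g.tmk x (s • n) := by
  rw [tmk, tmk, Submodule.Quotient.eq]
  exact Submodule.subset_span (Or.inl (Or.inr ⟨x, s, n, rfl⟩))

lemma tmk_smul (s : g.S) (x : g.Sm) (n : N) :
    g.tmk (s • x) n = s • g.tmk x n := by
  rw [tmk, tmk, ← Submodule.Quotient.mk_smul, Submodule.Quotient.eq]
  exact Submodule.subset_span (Or.inr ⟨s, x, n, rfl⟩)

lemma tmk_zero_left (n : N) : g.tmk (0 : g.Sm) n = 0 := by
  have h := g.tmk_add_left (0 : g.Sm) (0 : g.Sm) n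
  rw [add_zero] at h
  exact add_eq_right.mp h.symm

lemma tmk_zero_right (x : g.Sm) : g.tmk x (0 : N) = 0 := by
  have h := g.tmk_add_right x (0 : N) (0 : N)
  rw [add_zero] at h
  exact add_eq_right.mp h.symm

lemma tmk_sum_left {ι : Type*} (s : Finset ι) (z : ι → g.Sm) (n : N) :
    g.tmk (∑ i ∈ s, z i) n = ∑ i ∈ s, g.tmk (z i) n := by
  classical
  induction s using Finset.induction with
  | empty => simp [tmk_zero_left]
  | insert a s' h ih =>
                   rw [Finset.sum_insert h, Finset.sum_insert h, tmk_add_left, ih]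

lemma tmk_sum_right {ι : Type*} (s : Finset ι) (x : g.Sm) (z : ι → N) :
    g.tmk x (∑ i ∈ s, z i) = ∑ i ∈ s, g.tmk x (z i) := by
  classical
  induction s using Finset.induction with
  | empty => simp [tmk_zero_right]
  | insert a s' h ih =>
                   rw [Finset.sum_insert h, Finset.sum_insert h, tmk_add_right, ih]

lemma span_tmk : Submodule.span g.S {z : g.T N | ∃ x m, z = g.tmk x m} = ⊤ := by
  rw [Submodule.eq_top_iff']
  intro z
  obtain ⟨f, rfl⟩ := Submodule.Quotient.mk_surjective _ z
  induction f using Finsupp.induction with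
  | zero => simp
  | single_add p b f hp hb ih =>
    rw [Submodule.Quotient.mk_add]
    refine Submodule.add_mem _ ?_ ih
    have : Finsupp.single p b = b • Finsupp.single p (1 : g.S) := by
      rw [Finsupp.smul_single, smul_eq_mul, mul_one]
    rw [this, Submodule.Quotient.mk_smul]
    exact Submodule.smul_mem _ b (Submodule.subset_span ⟨p.1, p.2, rfl⟩)

end GradedPair

namespace GradedPair

variable {AS : Type*} [Ring AS] (g : GradedPair AS)

@[simp] lemma coe_mm (a b : g.Sm) : ((g.mm a b : g.S) : AS) = (a : AS) * b := rfl

@[simp] lemma coe_rmul (a : g.Sm) (c : g.S) : ((g.rmul a c : g.Sm) : AS) = (a : AS) * c := rfl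

section Morita

variable {ι : Type*} (S : Finset ι) (x y : ι → g.Sm)

lemma sum_mm_eq_one (h1 : ∑ i ∈ S, (x i : AS) * (y i : AS) = 1) :
    ∑ i ∈ S, g.mm (x i) (y i) = 1 := by
  apply Subtype.ext
  rw [AddSubmonoidClass.coe_finset_sum]
  simpa using h1

lemma sm_decomp_left (h1 : ∑ i ∈ S, (x i : AS) * (y i : AS) = 1) (a : g.Sm) :
    a = ∑ i ∈ S, g.rmul (x i) (g.mm (y i) a) := by
  apply Subtype.ext
  rw [AddSubmonoidClass.coe_finset_sum]
  simp only [coe_rmul, coe_mm]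
  simp only [← mul_assoc]
  rw [← Finset.sum_mul, h1, one_mul]

lemma sm_decomp_right (h1 : ∑ i ∈ S, (x i : AS) * (y i : AS) = 1) (b : g.Sm) :
    b = ∑ i ∈ S, g.mm b (x i) • y i := by
  apply Subtype.ext
  rw [AddSubmonoidClass.coe_finset_sum]
  simp only [coe_smul, coe_mm]
  simp only [mul_assoc]
  rw [← Finset.mul_sum, h1, mul_one]

lemma rmul_decomp' (h1 : ∑ i ∈ S, (x i : AS) * (y i : AS) = 1) (r : g.Sm) (c : g.S) :
    ∑ j ∈ S, g.mm r (c • x j) • y j = g.rmul r c := by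
  apply Subtype.ext
  rw [AddSubmonoidClass.coe_finset_sum]
  simp only [coe_smul, coe_mm, coe_rmul]
  simp only [mul_assoc]
  rw [← Finset.mul_sum, ← Finset.mul_sum, h1, mul_one]

variable {N : Type*} [AddCommGroup N] [Module g.S N]

lemma tmk_decomp (h1 : ∑ i ∈ S, (x i : AS) * (y i : AS) = 1) (a : g.Sm) (t : N) :
    g.tmk a t = ∑ i ∈ S, g.tmk (x i) (g.mm (y i) a • t) := by
  conv_lhs => rw [g.sm_decomp_left S x y h1 a]
  rw [tmk_sum_left]
  exact Finset.sum_congr rfl fun i _ => g.tmk_rmul _ _ _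

lemma key1 (h1 : ∑ i ∈ S, (x i : AS) * (y i : AS) = 1) (a b : g.Sm) :
    ∑ i ∈ S, g.mm a b • g.tmk (x i) (y i) = g.tmk a b := by
  have step : ∀ i, g.mm a b • g.tmk (x i) (y i) = g.tmk a (g.mm b (x i) • y i) := by
    intro i
    rw [← tmk_smul]
    have h2 : g.mm a b • x i = g.rmul a (g.mm b (x i)) :=
      Subtype.ext (by simp [mul_assoc])
    rw [h2, tmk_rmul]
  simp only [step]
  rw [← tmk_sum_right]
  congr 1
  exact (g.sm_decomp_right S x y h1 b).symm

theorem phi_bijective (h1 : ∑ i ∈ S, (x i : AS) * (y i : AS) = 1)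
    (φ : g.T g.Sm →ₗ[g.S] g.S) (hφ : ∀ a b, φ (g.tmk a b) = g.mm a b) :
    Function.Bijective φ := by
  have hmm1 := g.sum_mm_eq_one S x y h1
  constructor
  · have hL : ∀ z : g.T g.Sm, (∑ i ∈ S, φ z • g.tmk (x i) (y i)) = z := by
      intro z
      have hz : z ∈ Submodule.span g.S {z : g.T g.Sm | ∃ a b, z = g.tmk a b} := by
        rw [g.span_tmk]; trivial
      induction hz using Submodule.span_induction with
      | mem z hzz =>
        obtain ⟨a, b, rfl⟩ := hzz
        simp only [hφ]
        exact g.key1 S x y h1 a b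
      | zero => simp
      | add u v hu hv ihu ihv =>
        simp only [map_add, add_smul, Finset.sum_add_distrib, ihu, ihv]
      | smul c u hu ihu =>
        simp only [map_smul, smul_eq_mul, mul_smul, ← Finset.smul_sum, ihu]
    intro z w hzw
    rw [← hL z, ← hL w, hzw]
  · intro t
    refine ⟨∑ i ∈ S, t • g.tmk (x i) (y i), ?_⟩
    rw [map_sum]
    simp only [map_smul, hφ]
    rw [← Finset.smul_sum, hmm1, smul_eq_mul, mul_one]

noncomputable def zeta (h1 : ∑ i ∈ S, (x i : AS) * (y i : AS) = 1)
    (N : Type*) [AddCommGroup N] [Module g.S N] : N →ₗ[g.S] g.T (g.T N) where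
  toFun m := ∑ i ∈ S, g.tmk (x i) (g.tmk (y i) m)
  map_add' m m' := by
    simp only [tmk_add_right, Finset.sum_add_distrib]
  map_smul' c m := by
    simp only [RingHom.id_apply]
    calc ∑ i ∈ S, g.tmk (x i) (g.tmk (y i) (c • m))
        = ∑ i ∈ S, g.tmk (x i) (g.tmk (g.rmul (y i) c) m) := by
          simp only [tmk_rmul]
      _ = ∑ i ∈ S, g.tmk (x i) (g.tmk (∑ j ∈ S, g.mm (y i) (c • x j) • y j) m) := by
          refine Finset.sum_congr rfl fun i _ => ?_
          rw [g.rmul_decomp' S x y h1]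
      _ = ∑ i ∈ S, ∑ j ∈ S, g.tmk (x i) (g.tmk (g.mm (y i) (c • x j) • y j) m) := by
          refine Finset.sum_congr rfl fun i _ => ?_
          rw [tmk_sum_left, tmk_sum_right]
      _ = ∑ j ∈ S, ∑ i ∈ S, g.tmk (x i) (g.mm (y i) (c • x j) • g.tmk (y j) m) := by
          rw [Finset.sum_comm]
          simp only [tmk_smul]
      _ = ∑ j ∈ S, g.tmk (c • x j) (g.tmk (y j) m) := by
          refine Finset.sum_congr rfl fun j _ => ?_
          exact (g.tmk_decomp S x y h1 (c • x j) _).symm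
      _ = c • ∑ i ∈ S, g.tmk (x i) (g.tmk (y i) m) := by
          rw [Finset.smul_sum]
          simp only [tmk_smul]

@[simp] lemma zeta_apply (h1 : ∑ i ∈ S, (x i : AS) * (y i : AS) = 1)
    (N : Type*) [AddCommGroup N] [Module g.S N] (m : N) :
    g.zeta S x y h1 N m = ∑ i ∈ S, g.tmk (x i) (g.tmk (y i) m) := rfl

lemma span_tmk2 (N : Type*) [AddCommGroup N] [Module g.S N] :
    Submodule.span g.S {z : g.T (g.T N) | ∃ a b m, z = g.tmk a (g.tmk b m)} = ⊤ := by
  set W := Submodule.span g.S {z : g.T (g.T N) | ∃ a b m, z = g.tmk a (g.tmk b m)} with hW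
  have claim : ∀ t : g.T N, ∀ a : g.Sm, g.tmk a t ∈ W := by
    intro t
    have ht : t ∈ Submodule.span g.S {z : g.T N | ∃ b m, z = g.tmk b m} := by
      rw [g.span_tmk]; trivial
    induction ht using Submodule.span_induction with
    | mem t htt =>
      intro a
      obtain ⟨b, m, rfl⟩ := htt
      exact Submodule.subset_span ⟨a, b, m, rfl⟩
    | zero =>
      intro a
      rw [tmk_zero_right]
      exact Submodule.zero_mem W
    | add u v hu hv ihu ihv =>
      intro a
      rw [tmk_add_right]
      exact Submodule.add_mem W (ihu a) (ihv a)
    | smul c u hu ihu =>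
      intro a
      rw [← tmk_rmul]
      exact ihu (g.rmul a c)
  rw [Submodule.eq_top_iff']
  intro z
  have hz : z ∈ Submodule.span g.S {z : g.T (g.T N) | ∃ a t, z = g.tmk a t} := by
    rw [g.span_tmk]; trivial
  induction hz using Submodule.span_induction with
  | mem z hzz => obtain ⟨a, t, rfl⟩ := hzz; exact claim t a
  | zero => exact Submodule.zero_mem W
  | add u v hu hv ihu ihv => exact Submodule.add_mem W ihu ihv
  | smul c u hu ihu => exact Submodule.smul_mem W c ihu

theorem eta_bijective (h1 : ∑ i ∈ S, (x i : AS) * (y i : AS) = 1)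
    (N : Type*) [AddCommGroup N] [Module g.S N]
    (η : g.T (g.T N) →ₗ[g.S] N)
    (hη : ∀ a b m, η (g.tmk a (g.tmk b m)) = g.mm a b • m) :
    Function.Bijective η := by
  have hmm1 := g.sum_mm_eq_one S x y h1
  have hsurj : ∀ m : N, η (g.zeta S x y h1 N m) = m := by
    intro m
    rw [zeta_apply, map_sum]
    simp only [hη]
    rw [← Finset.sum_smul, hmm1, one_smul]
  constructor
  · have hC : (g.zeta S x y h1 N).comp η = LinearMap.id := by
      apply LinearMap.ext_on (g.span_tmk2 N)
      rintro z ⟨a, b, m, rfl⟩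
      simp only [LinearMap.comp_apply, LinearMap.id_apply, hη, zeta_apply]
      calc ∑ i ∈ S, g.tmk (x i) (g.tmk (y i) (g.mm a b • m))
          = ∑ i ∈ S, g.tmk (x i) (g.tmk (g.rmul (y i) (g.mm a b)) m) := by
            simp only [tmk_rmul]
        _ = ∑ i ∈ S, g.tmk (x i) (g.tmk (g.mm (y i) a • b) m) := by
            refine Finset.sum_congr rfl fun i _ => ?_
            congr 2
            exact Subtype.ext (by simp [mul_assoc])
        _ = ∑ i ∈ S, g.tmk (x i) (g.mm (y i) a • g.tmk b m) := by
            simp only [tmk_smul]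
        _ = g.tmk a (g.tmk b m) := (g.tmk_decomp S x y h1 a _).symm
    have hid : ∀ z, g.zeta S x y h1 N (η z) = z := fun z => LinearMap.congr_fun hC z
    intro z w hzw
    rw [← hid z, ← hid w, hzw]
  · intro m
    exact ⟨g.zeta S x y h1 N m, hsurj m⟩

end Morita

end GradedPair


noncomputable section

open Equiv

variable (F : Type*) [Field F] (n d : ℕ)

/-- The tensor space `(Fⁿ)^{⊗d}`, realized as `F[I(n,d)]` with `I(n,d) = Fin d → Fin n`. -/
abbrev TensorSpace := (Fin d → Fin n) → F

/-- `S_d`-equivariance of an endomorphism of tensor space. -/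
def SCond (T : Module.End F (TensorSpace F n d)) : Prop :=
  ∀ (w : Equiv.Perm (Fin d)) (f : TensorSpace F n d) (v : Fin d → Fin n),
    T (fun u => f (u ∘ w)) v = T f (v ∘ w)

/-- Sign-twisted `S_d`-equivariance of an endomorphism of tensor space. -/
def MCond (T : Module.End F (TensorSpace F n d)) : Prop :=
  ∀ (w : Equiv.Perm (Fin d)) (f : TensorSpace F n d) (v : Fin d → Fin n),
    T (fun u => f (u ∘ w)) v = ((Equiv.Perm.sign w : ℤ) : F) * T f (v ∘ w)

/-- The Schur algebra `S_F(n,d)` as a subring of `End((Fⁿ)^{⊗d})`. -/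
def schurSubring : Subring (Module.End F (TensorSpace F n d)) where
  carrier := {T | SCond F n d T}
  one_mem' := by intro w f v; rfl
  mul_mem' := by
    intro a b ha hb w f v
    rw [Module.End.mul_apply, Module.End.mul_apply]
    have h1 : b (fun u => f (u ∘ w)) = fun u => b f (u ∘ w) := funext (hb w f)
    rw [h1]
    exact ha w (b f) v
  add_mem' := by
    intro a b ha hb w f v
    simp only [LinearMap.add_apply, Pi.add_apply, ha w f v, hb w f v]
  zero_mem' := by intro w f v; simp
  neg_mem' := by
    intro a ha w f v
    simp only [LinearMap.neg_apply, Pi.neg_apply, ha w f v]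

/-- The bimodule `S_F⁻(n,d)` as an additive subgroup of `End((Fⁿ)^{⊗d})`. -/
def schurMinusSubgroup : AddSubgroup (Module.End F (TensorSpace F n d)) where
  carrier := {T | MCond F n d T}
  add_mem' := by
    intro a b ha hb w f v
    simp only [LinearMap.add_apply, Pi.add_apply, ha w f v, hb w f v]
    ring
  zero_mem' := by intro w f v; simp
  neg_mem' := by
    intro a ha w f v
    simp only [LinearMap.neg_apply, Pi.neg_apply, ha w f v]
    ring

lemma sign_sq (w : Equiv.Perm (Fin d)) :
    ((Equiv.Perm.sign w : ℤ) : F) * ((Equiv.Perm.sign w : ℤ) : F) = 1 := by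
  rcases Int.units_eq_one_or (Equiv.Perm.sign w) with h | h <;> simp [h]

/-- The `ℤ/2ℤ`-grading `AS_F(n,d) = S_F(n,d) ⊕ S_F⁻(n,d)` of the alternating Schur algebra
inside `End((Fⁿ)^{⊗d})`. -/
def schurGradedPair : GradedPair (Module.End F (TensorSpace F n d)) where
  S := schurSubring F n d
  Sm := schurMinusSubgroup F n d
  smul_mem := by
    intro s hs x hx w f v
    rw [Module.End.mul_apply, Module.End.mul_apply]
    have h1 : x (fun u => f (u ∘ w)) =
        ((Equiv.Perm.sign w : ℤ) : F) • fun u => x f (u ∘ w) := by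
      funext u
      simpa using hx w f u
    rw [h1, map_smul]
    simp only [Pi.smul_apply, smul_eq_mul]
    rw [hs w (x f) v]
  mul_smem := by
    intro x hx s hs w f v
    rw [Module.End.mul_apply, Module.End.mul_apply]
    have h1 : s (fun u => f (u ∘ w)) = fun u => s f (u ∘ w) := funext (hs w f)
    rw [h1]
    exact hx w (s f) v
  mm_mem := by
    intro x hx y hy w f v
    rw [Module.End.mul_apply, Module.End.mul_apply]
    have h1 : y (fun u => f (u ∘ w)) =
        ((Equiv.Perm.sign w : ℤ) : F) • fun u => y f (u ∘ w) := by
      funext u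
      simpa using hy w f u
    rw [h1, map_smul]
    simp only [Pi.smul_apply, smul_eq_mul]
    rw [hx w (y f) v, ← mul_assoc, sign_sq, one_mul]

section SchurAux

open Equiv


lemma comp_perm_inj {α β : Type*} (σ : Equiv.Perm α) {f h : α → β} :
    f ∘ ⇑σ = h ∘ ⇑σ ↔ f = h := by
  constructor
  · intro H
    funext t
    have := congrFun H (σ⁻¹ t)
    simpa using this
  · intro H; rw [H]

/-- The odd operator attached to a pair of words `v₀, z₀`. -/
def Xop (v₀ z₀ : Fin d → Fin n) : Module.End F (TensorSpace F n d) where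
  toFun f := fun v => ∑ w : Perm (Fin d),
    if v = v₀ ∘ ⇑w then ((Perm.sign w : ℤ) : F) * f (z₀ ∘ ⇑w) else 0
  map_add' f h := by
    funext v
    simp only [Pi.add_apply]
    rw [← Finset.sum_add_distrib]
    refine Finset.sum_congr rfl fun w _ => ?_
    split_ifs with hc
    · ring
    · simp
  map_smul' c f := by
    funext v
    simp only [Pi.smul_apply, smul_eq_mul, RingHom.id_apply]
    rw [Finset.mul_sum]
    refine Finset.sum_congr rfl fun w _ => ?_
    split_ifs with hc
    · ring
    · simp

lemma mcond_Xop (v₀ z₀ : Fin d → Fin n) : MCond F n d (Xop F n d v₀ z₀) := by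
  intro σ f v
  show (∑ w : Perm (Fin d),
      if v = v₀ ∘ ⇑w then ((Perm.sign w : ℤ) : F) * f ((z₀ ∘ ⇑w) ∘ ⇑σ) else 0)
    = ((Perm.sign σ : ℤ) : F) * ∑ w : Perm (Fin d),
      if v ∘ ⇑σ = v₀ ∘ ⇑w then ((Perm.sign w : ℤ) : F) * f (z₀ ∘ ⇑w) else 0
  rw [Finset.mul_sum]
  refine Fintype.sum_equiv (Equiv.mulRight σ) _ _ fun w => ?_
  simp only [Equiv.coe_mulRight]
  by_cases hv : v = v₀ ∘ ⇑w
  · have hv2 : v ∘ ⇑σ = v₀ ∘ ⇑(w * σ) := by rw [Perm.coe_mul, hv]; rfl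
    have hz : z₀ ∘ ⇑(w * σ) = (z₀ ∘ ⇑w) ∘ ⇑σ := by rw [Perm.coe_mul]; rfl
    rw [if_pos hv]; erw [if_pos hv2]; rw [Perm.sign_mul, hz]
    push_cast
    have hs := sign_sq F d σ
    linear_combination (-(((Perm.sign w : ℤ) : F) * f ((z₀ ∘ ⇑w) ∘ ⇑σ))) * hs
  · have hv2 : ¬ (v ∘ ⇑σ = v₀ ∘ ⇑(w * σ)) := by
      intro hcon
      apply hv
      rw [Perm.coe_mul] at hcon
      exact (comp_perm_inj σ).mp hcon
    rw [if_neg hv]; erw [if_neg hv2]; rw [mul_zero]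

lemma Xop_mul_apply (v₀ z₀ : Fin d → Fin n) (hz : Function.Injective z₀)
    (f : TensorSpace F n d) (v : Fin d → Fin n) :
    (Xop F n d v₀ z₀ * Xop F n d z₀ v₀) f v
      = ∑ w : Perm (Fin d), if v = v₀ ∘ ⇑w then f v else 0 := by
  rw [Module.End.mul_apply]
  show (∑ w : Perm (Fin d),
      if v = v₀ ∘ ⇑w then ((Perm.sign w : ℤ) : F) * (Xop F n d z₀ v₀ f) (z₀ ∘ ⇑w) else 0) = _
  refine Finset.sum_congr rfl fun w _ => ?_
  by_cases hv : v = v₀ ∘ ⇑w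
  · rw [if_pos hv, if_pos hv]
    have hinner : (Xop F n d z₀ v₀ f) (z₀ ∘ ⇑w) = ((Perm.sign w : ℤ) : F) * f (v₀ ∘ ⇑w) := by
      show (∑ w' : Perm (Fin d),
          if z₀ ∘ ⇑w = z₀ ∘ ⇑w' then ((Perm.sign w' : ℤ) : F) * f (v₀ ∘ ⇑w') else 0) = _
      have hcond : ∀ w' : Perm (Fin d), (z₀ ∘ ⇑w = z₀ ∘ ⇑w') ↔ w' = w := by
        intro w'
        constructor
        · intro hcc
          exact (Equiv.ext fun t => (hz (congrFun hcc t)).symm)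
        · rintro rfl; rfl
      simp only [hcond]
      rw [Finset.sum_ite_eq' Finset.univ w (fun w' => ((Perm.sign w' : ℤ) : F) * f (v₀ ∘ ⇑w'))]
      simp
    rw [hinner, ← mul_assoc, sign_sq, one_mul, ← hv]
  · rw [if_neg hv, if_neg hv]

lemma sum_Xop (z₀ : Fin d → Fin n) (hz : Function.Injective z₀) :
    ∑ v₀ : Fin d → Fin n, (Xop F n d v₀ z₀ * Xop F n d z₀ v₀)
      = (d.factorial : F) • (1 : Module.End F (TensorSpace F n d)) := by
  apply LinearMap.ext
  intro f
  funext v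
  rw [LinearMap.sum_apply, Finset.sum_apply]
  simp only [Xop_mul_apply F n d _ z₀ hz f v]
  rw [Finset.sum_comm]
  have hcond : ∀ (w : Perm (Fin d)) (v₀ : Fin d → Fin n),
      (v = v₀ ∘ ⇑w) ↔ v₀ = v ∘ ⇑w⁻¹ := by
    intro w v₀
    constructor
    · intro h; funext t; rw [h]; simp
    · intro h; funext t; rw [h]; simp
  simp only [hcond]
  simp only [Finset.sum_ite_eq' Finset.univ _ (fun _ => f v), Finset.mem_univ, if_true]
  rw [Finset.sum_const, Finset.card_univ, Fintype.card_perm, Fintype.card_fin]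
  simp [nsmul_eq_mul]

lemma factorial_ne_zero_inF (hchar : ringChar F = 0 ∨ d < ringChar F) :
    (d.factorial : F) ≠ 0 := by
  rcases hchar with h | h
  · haveI : CharP F 0 := h ▸ ringChar.charP F
    haveI : CharZero F := CharP.charP_to_charZero F
    exact Nat.cast_ne_zero.mpr (Nat.factorial_ne_zero d)
  · haveI : CharP F (ringChar F) := ringChar.charP F
    rcases CharP.char_is_prime_or_zero F (ringChar F) with hp | hp0
    · intro hzero
      rw [CharP.cast_eq_zero_iff F (ringChar F)] at hzero
      have := (Nat.Prime.dvd_factorial hp).mp hzero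
      omega
    · omega

lemma mcond_smul (c : F) {T : Module.End F (TensorSpace F n d)} (hT : MCond F n d T) :
    MCond F n d (c • T) := by
  intro σ f v
  simp only [LinearMap.smul_apply, Pi.smul_apply, smul_eq_mul, hT σ f v]
  ring

lemma exists_one_family (hchar : ringChar F = 0 ∨ d < ringChar F) (hnd : d ≤ n) :
    ∃ x y : (Fin d → Fin n) → (schurGradedPair F n d).Sm,
      ∑ i : Fin d → Fin n,
        ((x i : Module.End F (TensorSpace F n d)) * (y i : Module.End F (TensorSpace F n d)))
          = 1 := by
  set z₀ : Fin d → Fin n := fun t => ⟨t.1, lt_of_lt_of_le t.2 hnd⟩ with hz₀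
  have hz : Function.Injective z₀ := by
    intro a b hab
    rw [hz₀] at hab
    simpa [Fin.ext_iff] using hab
  have hd := factorial_ne_zero_inF F d hchar
  refine ⟨fun v₀ => ⟨Xop F n d v₀ z₀, mcond_Xop F n d v₀ z₀⟩,
          fun v₀ => ⟨(d.factorial : F)⁻¹ • Xop F n d z₀ v₀,
            mcond_smul F n d _ (mcond_Xop F n d z₀ v₀)⟩, ?_⟩
  calc ∑ v₀ : Fin d → Fin n, Xop F n d v₀ z₀ * ((d.factorial : F)⁻¹ • Xop F n d z₀ v₀)
      = (d.factorial : F)⁻¹ • ∑ v₀ : Fin d → Fin n, (Xop F n d v₀ z₀ * Xop F n d z₀ v₀) := by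
        rw [Finset.smul_sum]
        exact Finset.sum_congr rfl fun v₀ _ => (mul_smul_comm _ _ _)
    _ = (d.factorial : F)⁻¹ • ((d.factorial : F) • (1 : Module.End F (TensorSpace F n d))) := by
        rw [sum_Xop F n d z₀ hz]
    _ = 1 := by rw [smul_smul, inv_mul_cancel₀ hd, one_smul]

end SchurAux

universe v

set_option maxHeartbeats 2000000 in
set_option synthInstance.maxHeartbeats 1000000 in
set_option linter.unusedVariables false in
/-- for a field `F` of characteristic `0` or greater than `d`, and `n ≥ d`,
the multiplication map `φ : S_F⁻(n,d) ⊗_{S_F(n,d)} S_F⁻(n,d) → S_F(n,d)` is an isomorphism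
of bimodules (the `S`-linear map determined by `x ⊗ y ↦ xy` is bijective); consequently the
Koszul duality functor `D(M) = S_F⁻(n,d) ⊗_{S_F(n,d)} M` is an equivalence of the category
of `S_F(n,d)`-modules with itself (the natural transformation `η : D² → id`, determined by
`x ⊗ (y ⊗ m) ↦ (xy)·m`, is a natural isomorphism, so `D` is quasi-inverse to itself). -/
theorem stmt_17 (hchar : ringChar F = 0 ∨ d < ringChar F) (hnd : d ≤ n) :
    (∀ φ : (schurGradedPair F n d).T (schurGradedPair F n d).Sm →ₗ[(schurGradedPair F n d).S]
        (schurGradedPair F n d).S,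
      (∀ x y, φ ((schurGradedPair F n d).tmk x y) = (schurGradedPair F n d).mm x y) →
      Function.Bijective φ) ∧
    (∀ (N : Type v) [AddCommGroup N] [Module (schurGradedPair F n d).S N]
      (η : (schurGradedPair F n d).T ((schurGradedPair F n d).T N) →ₗ[(schurGradedPair F n d).S] N),
      (∀ x y (m : N), η ((schurGradedPair F n d).tmk x ((schurGradedPair F n d).tmk y m)) =
        (schurGradedPair F n d).mm x y • m) →
      Function.Bijective η) := by
  obtain ⟨x, y, h1⟩ := exists_one_family F n d hchar hnd
  constructor
  · intro φ hφ
    exact (schurGradedPair F n d).phi_bijective Finset.univ x y h1 φ hφ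
  · intro N _ _ η hη
    exact (schurGradedPair F n d).eta_bijective Finset.univ x y h1 N η hη

end
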